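/- Heterogeneous population posterior odds: with X partitioned into subpopulations X_1,...,X_m of sizes N_i, P(C ∈ X_i) = β_i, C uniform on each subpopulation, Γ_x independent Bernoulli(p_{X(x)}), and S independent of C, the posterior odds for a suspect s in subpopulation with frequency p_s and size N_s equal 1 / (N_s Σ_i p_i (β_i/β_s) − p_s), equivalently (1/p_s) · α_s/(N_s − α_s) where α_s = p_s β_s / Σ_j p_j β_j. -/

import Mathlib

open MeasureTheory ProbabilityTheory
open scoped ENNReal

/-- Heterogeneous population posterior odds. -/
theorem island_heterogeneous_posterior_odds
    {Ω : Type*} [MeasurableSpace Ω] (μ : Measure Ω) [IsProbabilityMeasure μ]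
    {X : Type*} [Fintype X] [DecidableEq X] [MeasurableSpace X] [MeasurableSingletonClass X]
    (m : ℕ) (sub : X → Fin m)                      -- subpopulation of each individual
    (Nsz : Fin m → ℕ)
    (hN : ∀ i, (Finset.univ.filter fun x => sub x = i).card = Nsz i)
    (hNpos : ∀ i, 0 < Nsz i)
    (β p : Fin m → ℝ≥0∞)
    (hβpos : ∀ i, β i ≠ 0) (hβsum : ∑ i, β i = 1)
    (hp0 : ∀ i, p i ≠ 0) (hp1 : ∀ i, p i ≤ 1)
    (C S : Ω → X) (hC : Measurable C) (hS : Measurable S)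
    (hCsub : ∀ i, μ {ω | sub (C ω) = i} = β i)
    (hCunifsub : ∀ x : X, μ {ω | C ω = x} = β (sub x) / (Nsz (sub x) : ℝ≥0∞))
    (hCS : IndepFun C S μ)
    (Γ : X → Ω → Bool) (hΓ : ∀ x, Measurable (Γ x))
    (hiid : iIndepFun Γ μ)
    (hBer : ∀ x, μ {ω | Γ x ω = true} = p (sub x))
    (hind : IndepFun (fun ω => (C ω, S ω)) (fun ω x => Γ x ω) μ)
    (s : X)
    (hpos : μ ({ω | S ω = s} ∩ {ω | Γ (C ω) ω = true} ∩ {ω | Γ s ω = true}) ≠ 0) :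
    μ[|{ω | S ω = s} ∩ {ω | Γ (C ω) ω = true} ∩ {ω | Γ s ω = true}] {ω | C ω = s}
      / μ[|{ω | S ω = s} ∩ {ω | Γ (C ω) ω = true} ∩ {ω | Γ s ω = true}] {ω | C ω ≠ s}
      = ((Nsz (sub s) : ℝ≥0∞) * ∑ i, p i * (β i / β (sub s)) - p (sub s))⁻¹ ∧
    μ[|{ω | S ω = s} ∩ {ω | Γ (C ω) ω = true} ∩ {ω | Γ s ω = true}] {ω | C ω = s}
      / μ[|{ω | S ω = s} ∩ {ω | Γ (C ω) ω = true} ∩ {ω | Γ s ω = true}] {ω | C ω ≠ s}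
      = (p (sub s))⁻¹
        * ((p (sub s) * β (sub s) / ∑ j, p j * β j)
            / ((Nsz (sub s) : ℝ≥0∞) - p (sub s) * β (sub s) / ∑ j, p j * β j)) := by
  classical
  set E : Set Ω := {ω | S ω = s} ∩ {ω | Γ (C ω) ω = true} ∩ {ω | Γ s ω = true} with hE
  -- measurability facts
  have hmCx : ∀ x : X, MeasurableSet {ω | C ω = x} := fun x => hC (measurableSet_singleton x)
  have hmS : MeasurableSet {ω | S ω = s} := hS (measurableSet_singleton s)
  have hmΓ : ∀ x : X, MeasurableSet {ω | Γ x ω = true} :=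
    fun x => (hΓ x) (measurableSet_singleton true)
  have hmΓC : MeasurableSet {ω | Γ (C ω) ω = true} := by
    have hset : {ω | Γ (C ω) ω = true} = ⋃ x : X, ({ω | C ω = x} ∩ {ω | Γ x ω = true}) := by
      ext ω
      simp only [Set.mem_setOf_eq, Set.mem_iUnion, Set.mem_inter_iff]
      constructor
      · intro h; exact ⟨C ω, rfl, h⟩
      · rintro ⟨x, hx, h⟩; rwa [hx]
    rw [hset]
    exact MeasurableSet.iUnion fun x => (hmCx x).inter (hmΓ x)
  have hmE : MeasurableSet E := (hmS.inter hmΓC).inter (hmΓ s)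
  -- basic finiteness/positivity facts
  have hβtop : ∀ i, β i ≠ ∞ := by
    intro i
    have h1 : β i ≤ 1 := by
      rw [← hβsum]
      exact Finset.single_le_sum (fun j _ => zero_le) (Finset.mem_univ i)
    exact (h1.trans_lt ENNReal.one_lt_top).ne
  have hptop : ∀ i, p i ≠ ∞ := fun i => ((hp1 i).trans_lt ENNReal.one_lt_top).ne
  have hn0 : (Nsz (sub s) : ℝ≥0∞) ≠ 0 := by
    exact_mod_cast Nat.cast_ne_zero.mpr (hNpos (sub s)).ne'
  have hntop : (Nsz (sub s) : ℝ≥0∞) ≠ ∞ := ENNReal.natCast_ne_top _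
  set a : ℝ≥0∞ := β (sub s) with ha
  set ps : ℝ≥0∞ := p (sub s) with hps
  set n : ℝ≥0∞ := (Nsz (sub s) : ℝ≥0∞) with hn
  set T : ℝ≥0∞ := ∑ j, p j * β j with hT
  have hT_top : T ≠ ∞ := by
    have h1 : T ≤ 1 := by
      rw [← hβsum, hT]
      exact Finset.sum_le_sum fun i _ => by
        calc p i * β i ≤ 1 * β i := mul_le_mul_left (hp1 i) _
        _ = β i := one_mul _
    exact (h1.trans_lt ENNReal.one_lt_top).ne
  have hT0 : T ≠ 0 := by
    intro h
    have h1 : ps * a ≤ T :=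
      Finset.single_le_sum (f := fun j => p j * β j) (fun j _ => zero_le) (Finset.mem_univ (sub s))
    rw [h, le_zero_iff] at h1
    exact (mul_ne_zero (hp0 _) (hβpos _)) h1
  -- fiberwise sums
  have hfiber : ∀ f : Fin m → ℝ≥0∞, ∑ x : X, f (sub x) = ∑ i, (Nsz i : ℝ≥0∞) * f i := by
    intro f
    rw [← Finset.sum_fiberwise_of_maps_to' (fun x _ => Finset.mem_univ (sub x)) f]
    refine Finset.sum_congr rfl fun i _ => ?_
    rw [Finset.sum_const, hN i, nsmul_eq_mul]
  have hTsum : ∑ x : X, p (sub x) * (β (sub x) / (Nsz (sub x) : ℝ≥0∞)) = T := by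
    rw [hfiber (fun i => p i * (β i / (Nsz i : ℝ≥0∞))), hT]
    refine Finset.sum_congr rfl fun i _ => ?_
    have h0 : (Nsz i : ℝ≥0∞) ≠ 0 := by
      exact_mod_cast Nat.cast_ne_zero.mpr (hNpos i).ne'
    rw [mul_left_comm, ENNReal.mul_div_cancel h0 (ENNReal.natCast_ne_top _)]
  set D : ℝ≥0∞ := ∑ x ∈ Finset.univ.erase s, p (sub x) * (β (sub x) / (Nsz (sub x) : ℝ≥0∞))
    with hD
  have hDT : D + ps * (a / n) = T := by
    rw [hD, Finset.sum_erase_add _ _ (Finset.mem_univ s), hTsum]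
  have hgs_top : ps * (a / n) ≠ ∞ :=
    ENNReal.mul_ne_top (hptop _) (ENNReal.div_lt_top (hβtop _) hn0).ne
  have hDval : T - ps * (a / n) = D := by
    rw [← hDT, ENNReal.add_sub_cancel_right hgs_top]
  have hDtop : D ≠ ∞ := by
    intro h
    apply hT_top
    rw [← hDT, h, top_add]
  -- key single-point computation
  have hkey : ∀ x : X, μ (E ∩ {ω | C ω = x}) =
      μ {ω | S ω = s} * (β (sub x) / (Nsz (sub x) : ℝ≥0∞)) *
        μ ({ω | Γ x ω = true} ∩ {ω | Γ s ω = true}) := by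
    intro x
    have hset : E ∩ {ω | C ω = x} =
        ((fun ω => (C ω, S ω)) ⁻¹' {(x, s)}) ∩
        ((fun ω y => Γ y ω) ⁻¹' ((fun f : X → Bool => f x) ⁻¹' {true} ∩
          (fun f : X → Bool => f s) ⁻¹' {true})) := by
      ext ω
      simp only [hE, Set.mem_inter_iff, Set.mem_setOf_eq, Set.mem_preimage,
        Set.mem_singleton_iff, Prod.mk.injEq]
      constructor
      · rintro ⟨⟨⟨h1, h2⟩, h3⟩, h4⟩
        exact ⟨⟨h4, h1⟩, by rw [← h4]; exact h2, h3⟩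
      · rintro ⟨⟨h4, h1⟩, h2, h3⟩
        exact ⟨⟨⟨h1, by rw [h4]; exact h2⟩, h3⟩, h4⟩
    have hBmeas : MeasurableSet ((fun f : X → Bool => f x) ⁻¹' {true} ∩
        (fun f : X → Bool => f s) ⁻¹' {true}) :=
      ((measurable_pi_apply x) (measurableSet_singleton true)).inter
        ((measurable_pi_apply s) (measurableSet_singleton true))
    rw [hset, hind.measure_inter_preimage_eq_mul _ _ (measurableSet_singleton _) hBmeas]
    have h1 : (fun ω => (C ω, S ω)) ⁻¹' {(x, s)} = (C ⁻¹' {x}) ∩ (S ⁻¹' {s}) := by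
      ext ω; simp [Prod.ext_iff]
    have h2 : ((fun ω (y : X) => Γ y ω) ⁻¹' ((fun f : X → Bool => f x) ⁻¹' {true} ∩
        (fun f : X → Bool => f s) ⁻¹' {true})) =
        {ω | Γ x ω = true} ∩ {ω | Γ s ω = true} := rfl
    rw [h1, h2, hCS.measure_inter_preimage_eq_mul _ _ (measurableSet_singleton x)
      (measurableSet_singleton s)]
    have h3 : C ⁻¹' ({x} : Set X) = {ω | C ω = x} := rfl
    have h4 : S ⁻¹' ({s} : Set X) = {ω | S ω = s} := rfl
    rw [h3, h4, hCunifsub x]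
    ring
  -- Bernoulli probabilities of the Γ-events
  have hΓs : μ ({ω | Γ s ω = true} ∩ {ω | Γ s ω = true}) = ps := by
    rw [Set.inter_self, hBer s]
  have hΓxs : ∀ x : X, x ≠ s →
      μ ({ω | Γ x ω = true} ∩ {ω | Γ s ω = true}) = p (sub x) * ps := by
    intro x hx
    have h := (hiid.indepFun hx).measure_inter_preimage_eq_mul ({true} : Set Bool) ({true} : Set Bool)
      (measurableSet_singleton true) (measurableSet_singleton true)
    have h1 : Γ x ⁻¹' ({true} : Set Bool) = {ω | Γ x ω = true} := rfl
    have h2 : Γ s ⁻¹' ({true} : Set Bool) = {ω | Γ s ω = true} := rfl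
    rw [h1, h2] at h
    rw [h, hBer x, hBer s]
  -- numerator and denominator
  set q : ℝ≥0∞ := μ {ω | S ω = s} with hq
  have hNum : μ (E ∩ {ω | C ω = s}) = q * ps * (a / n) := by
    rw [hkey s, hΓs]; ring
  have hsplit : E ∩ {ω | C ω ≠ s} = ⋃ x ∈ Finset.univ.erase s, (E ∩ {ω | C ω = x}) := by
    ext ω
    simp only [Set.mem_inter_iff, Set.mem_setOf_eq, Set.mem_iUnion, Finset.mem_erase,
      Finset.mem_univ, and_true, exists_prop]
    constructor
    · rintro ⟨h1, h2⟩; exact ⟨C ω, h2, h1, rfl⟩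
    · rintro ⟨x, hx, h1, h2⟩; exact ⟨h1, h2 ▸ hx⟩
  have hDen : μ (E ∩ {ω | C ω ≠ s}) = q * ps * D := by
    rw [hsplit, measure_biUnion_finset ?hd (fun x _ => hmE.inter (hmCx x))]
    · rw [hD, Finset.mul_sum]
      refine Finset.sum_congr rfl fun x hx => ?_
      rw [hkey x, hΓxs x (Finset.mem_erase.mp hx).1]
      ring
    · intro x _ y _ hxy
      refine Set.disjoint_left.mpr ?_
      rintro ω ⟨_, hωx⟩ ⟨_, hωy⟩
      exact hxy (hωx ▸ hωy ▸ rfl)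
  -- nonvanishing of q and ps
  have hEq0 : μ E ≠ 0 := hpos
  have hq0 : q ≠ 0 := by
    intro h
    apply hEq0
    refine measure_mono_null ?_ h
    exact (Set.inter_subset_left).trans Set.inter_subset_left
  have hqtop : q ≠ ∞ := measure_ne_top μ _
  -- the odds ratio
  have hratio : μ[|E] {ω | C ω = s} / μ[|E] {ω | C ω ≠ s} = (a / n) / D := by
    rw [cond_apply hmE, cond_apply hmE,
      ENNReal.mul_div_mul_left _ _ (ENNReal.inv_ne_zero.mpr (measure_ne_top μ E))
        (ENNReal.inv_ne_top.mpr hEq0),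
      hNum, hDen,
      ENNReal.mul_div_mul_left _ _ (mul_ne_zero hq0 (hp0 _))
        (ENNReal.mul_ne_top hqtop (hptop _))]
  -- first identity
  have goal1 : (a / n) / D = (n * ∑ i, p i * (β i / a) - ps)⁻¹ := by
    have hSig : ∑ i, p i * (β i / a) = T * a⁻¹ := by
      rw [hT, Finset.sum_mul]
      exact Finset.sum_congr rfl fun i _ => by rw [div_eq_mul_inv, mul_assoc]
    have hnatop : n / a ≠ ∞ := (ENNReal.div_lt_top hntop (hβpos _)).ne
    have e2 : (n / a) * (ps * (a / n)) = ps := by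
      rw [div_eq_mul_inv, div_eq_mul_inv]
      rw [show n * a⁻¹ * (ps * (a * n⁻¹)) = ps * (a * a⁻¹) * (n * n⁻¹) by ring,
        ENNReal.mul_inv_cancel (hβpos _) (hβtop _), ENNReal.mul_inv_cancel hn0 hntop,
        mul_one, mul_one]
    have e1 : n * (T * a⁻¹) - ps = (n / a) * D := by
      rw [← hDval, ENNReal.mul_sub (fun _ _ => hnatop), e2]
      congr 1
      rw [div_eq_mul_inv]
      ring
    rw [hSig, e1, ENNReal.mul_inv (Or.inl (ENNReal.div_pos hn0 (hβtop _)).ne') (Or.inl hnatop),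
      ENNReal.inv_div (Or.inl (hβtop _)) (Or.inl (hβpos _)), div_eq_mul_inv]
  have goal2 : (a / n) / D = ps⁻¹ * ((ps * a / T) / (n - ps * a / T)) := by
    have hpsatop : ps * a / T ≠ ∞ := (ENNReal.div_lt_top (ENNReal.mul_ne_top (hptop _) (hβtop _)) hT0).ne
    have hnd : n - ps * a / T = n * D / T := by
      have h1 : n * D / T + ps * a / T = n := by
        rw [ENNReal.div_add_div_same]
        have h2 : n * D + ps * a = n * T := by
          rw [← hDT, mul_add]
          congr 1
          rw [mul_left_comm, ENNReal.mul_div_cancel hn0 hntop]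
        rw [h2, mul_div_assoc, ENNReal.div_self hT0 hT_top, mul_one]
      calc n - ps * a / T = (n * D / T + ps * a / T) - ps * a / T := by rw [h1]
        _ = n * D / T := ENNReal.add_sub_cancel_right hpsatop
    rw [hnd]
    have h3 : (ps * a / T) / (n * D / T) = (ps * a) / (n * D) := by
      rw [div_eq_mul_inv, div_eq_mul_inv, div_eq_mul_inv,
        ENNReal.mul_inv (Or.inr (ENNReal.inv_ne_top.mpr hT0)) (Or.inr (ENNReal.inv_ne_zero.mpr hT_top)),
        inv_inv]
      rw [show ps * a * T⁻¹ * ((n * D)⁻¹ * T) = ps * a * (n * D)⁻¹ * (T⁻¹ * T) by ring,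
        ENNReal.inv_mul_cancel hT0 hT_top, mul_one, div_eq_mul_inv]
    rw [h3]
    rw [div_eq_mul_inv (ps * a), show ps⁻¹ * (ps * a * (n * D)⁻¹) = ps⁻¹ * ps * (a * (n * D)⁻¹) by ring,
      ENNReal.inv_mul_cancel (hp0 _) (hptop _), one_mul]
    rw [div_eq_mul_inv, div_eq_mul_inv, ENNReal.mul_inv (Or.inl hn0) (Or.inl hntop), mul_assoc]
  exact ⟨hratio.trans goal1, hratio.trans goal2⟩
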